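/- Let C be a finite lattice of languages over a finite alphabet A (closed under finite union and intersection, containing ∅ and A*). Define the canonical preorder ≤_C on A* by w ≤_C w' iff for all L ∈ C, w ∈ L implies w' ∈ L. Then a language L ⊆ A* belongs to C if and only if L is an upper set for ≤_C (i.e., u ∈ L and u ≤_C v implies v ∈ L). -/

import Mathlib

/-- A lattice of languages over `A`: contains `∅` and `A*`, closed under
finite union and finite intersection. -/
def IsLatticeClass {A : Type*} (C : Set (Set (List A))) : Prop :=
  ∅ ∈ C ∧ Set.univ ∈ C ∧ (∀ K L : Set (List A), K ∈ C → L ∈ C → K ∪ L ∈ C) ∧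
    (∀ K L : Set (List A), K ∈ C → L ∈ C → K ∩ L ∈ C)

/-- The canonical preorder associated to a class `C`:
`w ≤_C w'` iff every `L ∈ C` containing `w` also contains `w'`. -/
def CanPre {A : Type*} (C : Set (Set (List A))) (w w' : List A) : Prop :=
  ∀ L ∈ C, w ∈ L → w' ∈ L

lemma sInter_mem_aux {A : Type*} (C : Set (Set (List A))) (hlat : IsLatticeClass C)
    (D : Set (Set (List A))) (hD : D.Finite) (hsub : D ⊆ C) : ⋂₀ D ∈ C := by
  revert hsub
  refine Set.Finite.induction_on D hD ?_ ?_
  · intro _; simpa using hlat.2.1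
  · intro K D _ _ ih hsub
    rw [Set.sInter_insert]
    exact hlat.2.2.2 _ _ (hsub (Set.mem_insert _ _))
      (ih (fun x hx => hsub (Set.mem_insert_of_mem _ hx)))

lemma sUnion_mem_aux {A : Type*} (C : Set (Set (List A))) (hlat : IsLatticeClass C)
    (D : Set (Set (List A))) (hD : D.Finite) (hsub : D ⊆ C) : ⋃₀ D ∈ C := by
  revert hsub
  refine Set.Finite.induction_on D hD ?_ ?_
  · intro _; simpa using hlat.1
  · intro K D _ _ ih hsub
    rw [Set.sUnion_insert]
    exact hlat.2.2.1 _ _ (hsub (Set.mem_insert _ _))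
      (ih (fun x hx => hsub (Set.mem_insert_of_mem _ hx)))

/-- A language belongs to a finite lattice `C` iff it is an upper set for `≤_C`. -/
theorem stmt0 {A : Type*} [Fintype A] (C : Set (Set (List A)))
    (hfin : C.Finite) (hlat : IsLatticeClass C) (L : Set (List A)) :
    L ∈ C ↔ ∀ u v : List A, u ∈ L → CanPre C u v → v ∈ L := by
  constructor
  · intro hL u v hu hle
    exact hle L hL hu
  · intro hup
    -- K_u := intersection of all members of C containing u
    set K : List A → Set (List A) := fun u => ⋂₀ {M ∈ C | u ∈ M} with hK
    have hKmem : ∀ u, K u ∈ C := by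
      intro u
      exact sInter_mem_aux C hlat _ (hfin.subset (fun M hM => hM.1)) (fun M hM => hM.1)
    have hLeq : L = ⋃₀ {M | ∃ u ∈ L, M = K u} := by
      ext v
      constructor
      · intro hv
        exact ⟨K v, ⟨v, hv, rfl⟩, by intro M hM; exact hM.2⟩
      · rintro ⟨M, ⟨u, hu, rfl⟩, hv⟩
        refine hup u v hu ?_
        intro M hM huM
        exact Set.mem_sInter.mp hv M ⟨hM, huM⟩
    rw [hLeq]
    refine sUnion_mem_aux C hlat _ (hfin.subset ?_) ?_ <;>
      · rintro M ⟨u, hu, rfl⟩; exact hKmem u
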